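/- Let (φ, b) solve φ' = (b² - 1)/(2h²), b' = 2bφ on (0, t₀] with b(t) ∈ (0,1), φ(t) > 0 on (0, t₀], and h(t)² = t² + O(t³) as t → 0⁺. Then lim_{t → 0⁺} t·φ(t) = 1/2. -/

import Mathlib

open Real Filter Set

lemma mono_aux {f f' : ℝ → ℝ} {T : ℝ}
    (hd : ∀ x ∈ Ioc (0:ℝ) T, HasDerivAt f (f' x) x)
    (h0 : ∀ x ∈ Ioo (0:ℝ) T, 0 ≤ f' x) : MonotoneOn f (Ioc 0 T) := by
  have hi : interior (Ioc (0:ℝ) T) = Ioo 0 T := interior_Ioc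
  apply monotoneOn_of_deriv_nonneg (convex_Ioc 0 T)
    (fun x hx => (hd x hx).continuousAt.continuousWithinAt)
  · rw [hi]
    exact fun x hx => ((hd x (Ioo_subset_Ioc_self hx)).differentiableAt).differentiableWithinAt
  · rw [hi]
    intro x hx
    rw [(hd x (Ioo_subset_Ioc_self hx)).deriv]
    exact h0 x hx

lemma anti_aux {f f' : ℝ → ℝ} {T : ℝ}
    (hd : ∀ x ∈ Ioc (0:ℝ) T, HasDerivAt f (f' x) x)
    (h0 : ∀ x ∈ Ioo (0:ℝ) T, f' x ≤ 0) : AntitoneOn f (Ioc 0 T) := by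
  have hi : interior (Ioc (0:ℝ) T) = Ioo 0 T := interior_Ioc
  apply antitoneOn_of_deriv_nonpos (convex_Ioc 0 T)
    (fun x hx => (hd x hx).continuousAt.continuousWithinAt)
  · rw [hi]
    exact fun x hx => ((hd x (Ioo_subset_Ioc_self hx)).differentiableAt).differentiableWithinAt
  · rw [hi]
    intro x hx
    rw [(hd x (Ioo_subset_Ioc_self hx)).deriv]
    exact h0 x hx

lemma tlogt : Tendsto (fun x : ℝ => x * log x) (nhdsWithin 0 (Ioi 0)) (nhds 0) := by
  have := tendsto_log_mul_rpow_nhdsGT_zero (zero_lt_one)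
  simp only [rpow_one] at this
  simpa [mul_comm] using this

set_option maxHeartbeats 1000000 in
theorem t_phi_tendsto_half
    (h φ b : ℝ → ℝ) (t₀ : ℝ) (ht₀ : 0 < t₀)
    (hhpos : ∀ t ∈ Ioi (0:ℝ), 0 < h t)
    (hhasymp : ∃ C : ℝ, 0 < C ∧ ∀ t ∈ Ioc (0:ℝ) t₀, |h t ^ 2 - t ^ 2| ≤ C * t ^ 3)
    (hODE : ∀ t ∈ Ioc (0:ℝ) t₀,
      HasDerivAt φ ((b t ^ 2 - 1) / (2 * h t ^ 2)) t ∧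
      HasDerivAt b (2 * b t * φ t) t)
    (hb : ∀ t ∈ Ioc (0:ℝ) t₀, b t ∈ Ioo (0:ℝ) 1)
    (hφ : ∀ t ∈ Ioc (0:ℝ) t₀, 0 < φ t) :
    Tendsto (fun t => t * φ t) (nhdsWithin 0 (Ioi 0)) (nhds (1 / 2)) := by
  obtain ⟨C, hC, hCb⟩ := hhasymp
  set t₁ : ℝ := min t₀ (1/(2*C)) with ht₁def
  have ht₁ : 0 < t₁ := lt_min ht₀ (by positivity)
  have ht₁t₀ : t₁ ≤ t₀ := min_le_left _ _
  have ht₁C : t₁ ≤ 1/(2*C) := min_le_right _ _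
  have ht₁m : t₁ ∈ Ioc (0:ℝ) t₁ := ⟨ht₁, le_refl _⟩
  have hsub : ∀ {t : ℝ}, t ∈ Ioc (0:ℝ) t₁ → t ∈ Ioc (0:ℝ) t₀ :=
    fun ht => ⟨ht.1, ht.2.trans ht₁t₀⟩
  -- basic bounds on h^2 for t ∈ (0, t₁]
  have hhub : ∀ t ∈ Ioc (0:ℝ) t₁, h t ^ 2 ≤ t^2 + C*t^3 := by
    intro t ht
    have := (abs_le.1 (hCb t (hsub ht))).2
    linarith
  have hhlb : ∀ t ∈ Ioc (0:ℝ) t₁, t^2 - C*t^3 ≤ h t ^ 2 := by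
    intro t ht
    have := (abs_le.1 (hCb t (hsub ht))).1
    linarith
  have hCt : ∀ t ∈ Ioc (0:ℝ) t₁, C * t ≤ 1/2 := by
    intro t ht
    have h1 : t ≤ 1/(2*C) := ht.2.trans ht₁C
    rw [le_div_iff₀ (by positivity)] at h1
    linarith
  have hhp2 : ∀ t ∈ Ioc (0:ℝ) t₁, 0 < h t ^ 2 := by
    intro t ht
    exact pow_pos (hhpos t ht.1) 2
  -- b is monotone on (0, t₀]
  have hbmono : MonotoneOn b (Ioc 0 t₀) := by
    apply mono_aux (f' := fun t => 2 * b t * φ t) (fun x hx => (hODE x hx).2)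
    intro x hx
    have h1 := hb x (Ioo_subset_Ioc_self hx)
    have h2 := hφ x (Ioo_subset_Ioc_self hx)
    exact (mul_pos (mul_pos two_pos h1.1) h2).le
  -- upper bound : φ t ≤ 1/(2t) - C log t + K₁
  set K₁ : ℝ := φ t₁ - (1/2)*t₁⁻¹ + C * log t₁ with hK₁
  have hupper : ∀ t ∈ Ioc (0:ℝ) t₁, φ t ≤ (1/2)*t⁻¹ - C * log t + K₁ := by
    have hm : MonotoneOn (fun t => φ t + (-(1/2))*t⁻¹ + C * log t) (Ioc 0 t₁) := by
      apply mono_aux (f' := fun t =>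
        (b t ^ 2 - 1) / (2 * h t ^ 2) + (-(1/2)) * (-(t^2)⁻¹) + C * t⁻¹)
      · intro x hx
        exact (((hODE x (hsub hx)).1.add
          ((hasDerivAt_inv hx.1.ne').const_mul (-(1/2)))).add
          ((Real.hasDerivAt_log hx.1.ne').const_mul C))
      · intro t ht
        have ht' : t ∈ Ioc (0:ℝ) t₁ := Ioo_subset_Ioc_self ht
        have htp := ht'.1
        have hbt := hb t (hsub ht')
        have hl := hhlb t ht'
        have hct := hCt t ht'
        have hhp := hhp2 t ht'
        have key : (1 - b t ^2)/(2*h t ^2) ≤ (1 + 2*C*t)/(2*t^2) := by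
          rw [div_le_div_iff₀ (by positivity) (by positivity)]
          nlinarith [mul_nonneg (mul_nonneg hC.le (pow_pos htp 3).le)
              (by linarith : (0:ℝ) ≤ 1 - 2*C*t),
            mul_le_mul_of_nonneg_left hl (by positivity : (0:ℝ) ≤ 2*(1+2*C*t)),
            sq_nonneg (b t), mul_pos htp htp]
        have e : (1 + 2*C*t)/(2*t^2) = (1/2)*(t^2)⁻¹ + C * t⁻¹ := by
          field_simp
        rw [e] at key
        have e2 : (-(1/2)) * (-(t^2)⁻¹) = (1/2)*(t^2:ℝ)⁻¹ := by ring
        have eneg : (b t ^2 - 1)/(2*h t ^2) = -((1 - b t ^2)/(2*h t ^2)) := by ring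
        rw [e2, eneg]
        linarith
    intro t ht
    have := hm ht ht₁m ht.2
    simp only at this
    rw [hK₁]
    linarith
  -- lower bound, parametrized by s
  have hlower : ∀ s ∈ Ioc (0:ℝ) t₁, ∀ t ∈ Ioc (0:ℝ) s,
      (1 - b s ^2)*((1/2)*t⁻¹) + C * log t
        + (φ s - (1 - b s ^2)*((1/2)*s⁻¹) - C * log s) ≤ φ t := by
    intro s hs
    have hssub : ∀ {t : ℝ}, t ∈ Ioc (0:ℝ) s → t ∈ Ioc (0:ℝ) t₁ :=
      fun ht => ⟨ht.1, ht.2.trans hs.2⟩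
    have hbs := hb s (hsub hs)
    have hm : AntitoneOn (fun t => φ t + (-((1 - b s ^2)/2))*t⁻¹ - C * log t)
        (Ioc 0 s) := by
      apply anti_aux (f' := fun t =>
        (b t ^ 2 - 1) / (2 * h t ^ 2) + (-((1 - b s ^2)/2)) * (-(t^2)⁻¹) - C * t⁻¹)
      · intro x hx
        exact (((hODE x (hsub (hssub hx))).1.add
          ((hasDerivAt_inv hx.1.ne').const_mul (-((1 - b s ^2)/2)))).sub
          ((Real.hasDerivAt_log hx.1.ne').const_mul C))
      · intro t ht
        have ht' : t ∈ Ioc (0:ℝ) t₁ := hssub (Ioo_subset_Ioc_self ht)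
        have htp := ht'.1
        have hbt := hb t (hsub ht')
        have hble : b t ≤ b s := hbmono (hsub ht') (hsub hs) (le_of_lt ht.2)
        have hbb : b t ^ 2 ≤ b s ^ 2 := by nlinarith [hbt.1]
        have hu := hhub t ht'
        have hl := hhlb t ht'
        have hct := hCt t ht'
        have hhp := hhp2 t ht'
        have key : (1 - b s ^2)/(2*t^2) ≤ (1 - b t ^2)/(2*h t ^2) + C/t := by
          rw [div_add_div _ _ (by positivity) (by positivity : (t:ℝ) ≠ 0),
            div_le_div_iff₀ (by positivity) (by positivity)]
          have hbs1 : b s ^ 2 < 1 := by nlinarith [hbs.1, hbs.2]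
          nlinarith [mul_le_mul_of_nonneg_left hu
              (by nlinarith [hbs1, htp] : (0:ℝ) ≤ 2*t*(1 - b s ^2)),
            mul_le_mul_of_nonneg_left hl (by positivity : (0:ℝ) ≤ 4*C*t^2),
            mul_nonneg (mul_nonneg (by norm_num : (0:ℝ) ≤ 2) (pow_pos htp 3).le)
              (sub_nonneg.2 hbb),
            mul_nonneg (mul_nonneg hC.le (pow_pos htp 4).le)
              (by linarith : (0:ℝ) ≤ 1 - 2*C*t)]
        have e : (1 - b s ^2)/(2*t^2) = (-((1 - b s ^2)/2)) * (-(t^2:ℝ)⁻¹) := by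
          field_simp
        have e2 : C/t = C * t⁻¹ := by ring
        rw [e, e2] at key
        have eneg : (b t ^2 - 1)/(2*h t ^2) = -((1 - b t ^2)/(2*h t ^2)) := by ring
        rw [eneg]
        linarith
    intro t ht
    have hsm : s ∈ Ioc (0:ℝ) s := ⟨hs.1, le_refl _⟩
    have := hm ht hsm ht.2
    simp only at this
    have e3 : (-((1 - b s ^2)/2))*t⁻¹ = -((1 - b s ^2)*((1/2)*t⁻¹)) := by ring
    have e4 : (-((1 - b s ^2)/2))*s⁻¹ = -((1 - b s ^2)*((1/2)*s⁻¹)) := by ring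
    rw [e3, e4] at this
    linarith
  -- b decays: for every ε > 0 there is s ∈ (0,t₁] with b s < ε
  have hbdecay : ∀ ε : ℝ, 0 < ε → ∃ s ∈ Ioc (0:ℝ) t₁, b s < ε := by
    intro ε hε
    set c₀ : ℝ := 1 - b t₁ ^ 2 with hc₀def
    have hbt₁ := hb t₁ (hsub ht₁m)
    have hc₀ : 0 < c₀ := by nlinarith [hbt₁.1, hbt₁.2]
    set K₂ : ℝ := φ t₁ - c₀*((1/2)*t₁⁻¹) - C * log t₁ with hK₂
    have hφlow : ∀ t ∈ Ioc (0:ℝ) t₁, c₀*((1/2)*t⁻¹) + C * log t + K₂ ≤ φ t := by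
      intro t ht
      exact hlower t₁ ht₁m t ht
    -- L monotone
    have hm : MonotoneOn (fun t => log (b t) - c₀ * log t - 2*C*(t * log t - t)
        - 2*K₂*t) (Ioc 0 t₁) := by
      apply mono_aux (f' := fun t => (b t)⁻¹ * (2 * b t * φ t) - c₀ * t⁻¹
        - 2*C*(1 * log t + t * t⁻¹ - 1) - 2*K₂*1)
      · intro x hx
        have hbx := hb x (hsub hx)
        have h1 : HasDerivAt (fun t => log (b t)) ((b x)⁻¹ * (2 * b x * φ x)) x :=
          (Real.hasDerivAt_log hbx.1.ne').comp x (hODE x (hsub hx)).2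
        have h2 : HasDerivAt (fun t : ℝ => t * log t - t) (1 * log x + x * x⁻¹ - 1) x :=
          ((hasDerivAt_id x).mul (Real.hasDerivAt_log hx.1.ne')).sub (hasDerivAt_id x)
        exact ((h1.sub ((Real.hasDerivAt_log hx.1.ne').const_mul c₀)).sub
          (h2.const_mul (2*C))).sub ((hasDerivAt_id x).const_mul (2*K₂))
      · intro t ht
        have ht' : t ∈ Ioc (0:ℝ) t₁ := Ioo_subset_Ioc_self ht
        have hbt := hb t (hsub ht')
        have e1 : (b t)⁻¹ * (2 * b t * φ t) = 2 * φ t := by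
          rw [show (2:ℝ) * b t * φ t = b t * (2 * φ t) by ring,
            inv_mul_cancel_left₀ hbt.1.ne']
        have e2 : t * t⁻¹ = (1:ℝ) := mul_inv_cancel₀ ht'.1.ne'
        rw [e1, e2]
        have := hφlow t ht'
        nlinarith [this]
    -- the RHS bound tends to -∞
    set R : ℝ → ℝ := fun t => c₀ * log t + (2*C*(t * log t - t) + 2*K₂*t
      + (log (b t₁) - c₀ * log t₁ - 2*C*(t₁ * log t₁ - t₁) - 2*K₂*t₁)) with hR
    have hlogb : ∀ t ∈ Ioc (0:ℝ) t₁, log (b t) ≤ R t := by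
      intro t ht
      have := hm ht ht₁m ht.2
      simp only at this
      rw [hR]
      simp only
      linarith
    have hRbot : Tendsto R (nhdsWithin 0 (Ioi 0)) atBot := by
      rw [hR]
      set ρ : ℝ := log (b t₁) - c₀ * log t₁ - 2*C*(t₁ * log t₁ - t₁) - 2*K₂*t₁ with hρ
      have hg : Tendsto (fun t : ℝ => 2*C*(t * log t - t) + 2*K₂*t + ρ)
          (nhdsWithin 0 (Ioi 0)) (nhds (2*C*(0 - 0) + 2*K₂*0 + ρ)) := by
        apply Tendsto.add _ tendsto_const_nhds
        apply Tendsto.add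
        · exact (tlogt.sub (tendsto_nhdsWithin_of_tendsto_nhds
            (continuous_id.tendsto 0))).const_mul (2*C)
        · exact (tendsto_nhdsWithin_of_tendsto_nhds
            (continuous_id.tendsto 0)).const_mul (2*K₂)
      have hg' : Tendsto (fun t : ℝ => 2*C*(t * log t - t) + 2*K₂*t + ρ)
          (nhdsWithin 0 (Ioi 0)) (nhds ρ) := by
        convert hg using 2
        ring
      exact tendsto_atBot_add_right_of_ge' _ (ρ + 1)
        ((tendsto_const_mul_atBot_of_pos hc₀).2 tendsto_log_nhdsGT_zero)
        ((hg'.eventually_lt_const (lt_add_one ρ)).mono (fun x hx => hx.le))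
    have hev : ∀ᶠ t in nhdsWithin 0 (Ioi 0), R t < log ε ∧ t ∈ Ioc (0:ℝ) t₁ :=
      (hRbot.eventually (eventually_lt_atBot (log ε))).and
        (eventually_of_mem (Ioc_mem_nhdsGT_of_mem ⟨le_refl 0, ht₁⟩) (fun x hx => hx))
    obtain ⟨s, hs1, hs2⟩ := hev.exists
    refine ⟨s, hs2, ?_⟩
    have hbs := hb s (hsub hs2)
    have : log (b s) < log ε := lt_of_le_of_lt (hlogb s hs2) hs1
    have := Real.exp_lt_exp.2 this
    rwa [Real.exp_log hbs.1, Real.exp_log hε] at this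
  -- assemble
  rw [tendsto_order]
  constructor
  · -- lower
    intro a ha
    obtain ⟨a', haa, ha'0, ha'⟩ : ∃ a', a ≤ a' ∧ 0 ≤ a' ∧ a' < 1/2 :=
      ⟨max a 0, le_max_left _ _, le_max_right _ _, max_lt ha (by norm_num)⟩
    obtain ⟨ε, hε, hε2⟩ : ∃ ε, 0 < ε ∧ ε^2 = 1/2 - a' :=
      ⟨Real.sqrt (1/2 - a'), Real.sqrt_pos.2 (by linarith),
        Real.sq_sqrt (by linarith)⟩
    obtain ⟨s, hs, hbsε⟩ := hbdecay ε hε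
    have hbs := hb s (hsub hs)
    have hbs2 : b s ^ 2 < 1/2 - a' := by
      have h9 : b s * b s < ε * ε := mul_self_lt_mul_self hbs.1.le hbsε
      rw [← hε2, pow_two, pow_two]
      exact h9
    have hγpos : 0 < (1 - b s ^2)/2 - a' := by linarith
    obtain ⟨K₂, hK₂'⟩ : ∃ k : ℝ, k = φ s - (1 - b s ^2)*((1/2)*s⁻¹) - C * log s :=
      ⟨_, rfl⟩
    have hg0 : Tendsto (fun t : ℝ => t * (C * log t + K₂)) (nhdsWithin 0 (Ioi 0))
        (nhds 0) := by
      have : Tendsto (fun t : ℝ => C * (t * log t) + K₂ * t) (nhdsWithin 0 (Ioi 0))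
          (nhds (C * 0 + K₂ * 0)) :=
        (tlogt.const_mul C).add ((tendsto_nhdsWithin_of_tendsto_nhds
          (continuous_id.tendsto 0)).const_mul K₂)
      simp only [mul_zero, add_zero] at this
      refine this.congr (fun t => by ring)
    have hev1 : ∀ᶠ t in nhdsWithin 0 (Ioi 0),
        -((1 - b s ^2)/2 - a') < t * (C * log t + K₂) :=
      hg0.eventually_const_lt (by linarith)
    have hev2 : ∀ᶠ t in nhdsWithin 0 (Ioi 0), t ∈ Ioc (0:ℝ) s :=
      eventually_of_mem (Ioc_mem_nhdsGT_of_mem ⟨le_refl 0, hs.1⟩) (fun x hx => hx)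
    filter_upwards [hev1, hev2] with t h1 h2
    have hlo := hlower s hs t h2
    rw [← hK₂'] at hlo
    have htp : 0 < t := h2.1
    have : t * ((1 - b s ^2)*((1/2)*t⁻¹) + C * log t + K₂) ≤ t * φ t :=
      mul_le_mul_of_nonneg_left hlo htp.le
    have e : t * ((1 - b s ^2)*((1/2)*t⁻¹) + C * log t + K₂)
        = (1 - b s ^2)/2 + t * (C * log t + K₂) := by
      field_simp
      ring
    rw [e] at this
    have : a' < t * φ t := by linarith
    exact lt_of_le_of_lt haa this
  · -- upper
    intro a ha
    have hU : Tendsto (fun t : ℝ => 1/2 + (K₁ * t - C * (t * log t)))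
        (nhdsWithin 0 (Ioi 0)) (nhds (1/2 + (K₁ * 0 - C * 0))) := by
      exact tendsto_const_nhds.add (((tendsto_nhdsWithin_of_tendsto_nhds
        (continuous_id.tendsto 0)).const_mul K₁).sub (tlogt.const_mul C))
    simp only [mul_zero, sub_zero, add_zero] at hU
    have hev1 : ∀ᶠ t in nhdsWithin 0 (Ioi 0),
        1/2 + (K₁ * t - C * (t * log t)) < a := hU.eventually_lt_const ha
    have hev2 : ∀ᶠ t in nhdsWithin 0 (Ioi 0), t ∈ Ioc (0:ℝ) t₁ :=
      eventually_of_mem (Ioc_mem_nhdsGT_of_mem ⟨le_refl 0, ht₁⟩) (fun x hx => hx)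
    filter_upwards [hev1, hev2] with t h1 h2
    have htp : 0 < t := h2.1
    have hup := hupper t h2
    have : t * φ t ≤ t * ((1/2)*t⁻¹ - C * log t + K₁) :=
      mul_le_mul_of_nonneg_left hup htp.le
    have e : t * ((1/2)*t⁻¹ - C * log t + K₁)
        = 1/2 + (K₁ * t - C * (t * log t)) := by
      field_simp
      ring
    rw [e] at this
    linarith
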